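/- arXiv:1905.02835 — 2 statements merged into one kernel-verified Lean document; each statement's English description precedes it below -/
import Mathlib

section
/- Let R be a commutative ring, K a natural number, c : Fin K → R a family of constants, and P : Fin K → MvPolynomial (Fin K) R a family of polynomials such that for every i, every monomial in the support of P i involves only variables x_j with j < i. Fix an exponent vector α : Fin K → ℕ and let Q = ∏_{i} (c_i · x_i + P_i)^{α_i}. Then every exponent vector β in the support of Q is either equal to α or strictly smaller than α in the lexicographic order on exponent vectors in which the variable with the highest index is the most significant (i.e., at the largest index where β and α differ, β is smaller). -/
open MvPolynomial Finsupp

lemma auxA {R : Type*} [CommRing R] {K : ℕ} (c : R) (p : MvPolynomial (Fin K) R) (i : Fin K)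
    (hp : ∀ m ∈ p.support, ∀ j : Fin K, m j ≠ 0 → j < i) (n : ℕ) :
    ∀ m ∈ ((MvPolynomial.C c * MvPolynomial.X i + p) ^ n).support,
      (∀ j, i < j → m j = 0) ∧ m i ≤ n ∧ (m i = n → m = Finsupp.single i n) := by
  induction n with
  | zero =>
    intro m hm
    rw [pow_zero, MvPolynomial.mem_support_iff, MvPolynomial.coeff_one] at hm
    have : m = 0 := by
      by_contra h
      simp [Ne.symm h] at hm
    subst this
    simp
  | succ n ih =>
    intro m hm
    rw [pow_succ] at hm
    have := MvPolynomial.support_mul _ _ hm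
    rw [Finset.mem_add] at this
    obtain ⟨a, ha, b, hb, rfl⟩ := this
    obtain ⟨ha1, ha2, ha3⟩ := ih a ha
    have hb' := MvPolynomial.support_add hb
    rw [Finset.mem_union] at hb'
    rcases hb' with hb' | hb'
    · -- b ∈ support (C c * X i), so b = single i 1
      have hbe : b = Finsupp.single i 1 := by
        rw [MvPolynomial.mem_support_iff, MvPolynomial.coeff_C_mul, MvPolynomial.coeff_X'] at hb'
        by_contra h
        simp [Ne.symm h] at hb'
      subst hbe
      refine ⟨fun j hj => ?_, ?_, fun h => ?_⟩
      · simp [ha1 j hj, Finsupp.single_apply, (hj.ne').symm, hj.ne']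
      · simp only [Finsupp.add_apply, Finsupp.single_eq_same]
        omega
      · have hai : a i = n := by
          simp [Finsupp.single_apply] at h; omega
        rw [ha3 hai, ← Finsupp.single_add]
    · -- b ∈ support p
      have hbi : ∀ j, i ≤ j → b j = 0 := by
        intro j hj
        by_contra h
        exact absurd (hp b hb' j h) (not_lt.mpr hj)
      refine ⟨fun j hj => ?_, ?_, fun h => ?_⟩
      · simp [ha1 j hj, hbi j hj.le]
      · simp [hbi i le_rfl]; omega
      · exfalso
        simp [hbi i le_rfl] at h
        omega

lemma auxB {σ : Type*} {R : Type*} [CommRing R] {ι : Type*} (s : Finset ι)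
    (f : ι → MvPolynomial σ R) :
    ∀ β ∈ (∏ i ∈ s, f i).support, ∃ m : ι → (σ →₀ ℕ),
      (∀ i ∈ s, m i ∈ (f i).support) ∧ β = ∑ i ∈ s, m i := by
  classical
  induction s using Finset.induction with
  | empty =>
    intro β hβ
    rw [Finset.prod_empty, MvPolynomial.mem_support_iff, MvPolynomial.coeff_one] at hβ
    have : β = 0 := by
      by_contra h
      simp [Ne.symm h] at hβ
    exact ⟨fun _ => 0, by simp, by simp [this]⟩
  | @insert a s' hx ih =>
    intro β hβ
    rw [Finset.prod_insert hx] at hβ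
    have := MvPolynomial.support_mul _ _ hβ
    rw [Finset.mem_add] at this
    obtain ⟨u, hu, v, hv, rfl⟩ := this
    obtain ⟨m, hm, rfl⟩ := ih v hv
    refine ⟨Function.update m a u, fun i hi => ?_, ?_⟩
    · rcases Finset.mem_insert.mp hi with rfl | hi
      · simpa using hu
      · rw [Function.update_of_ne (fun h : i = a => hx (h ▸ hi))]
        exact hm i hi
    · rw [Finset.sum_insert hx, Function.update_self]
      congr 1
      apply Finset.sum_congr rfl
      intro i hi
      rw [Function.update_of_ne (fun h : i = a => hx (h ▸ hi))]

/-- Lemma (reduction): every exponent vector in the support of the triangular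
product `∏ i, (c i • X i + P i) ^ (α i)` is either `α` itself or strictly smaller
than `α` in the lexicographic order where the highest-index variable is most
significant. -/
theorem stmt_0 (R : Type*) [CommRing R] (K : ℕ)
    (c : Fin K → R) (P : Fin K → MvPolynomial (Fin K) R)
    (hP : ∀ i : Fin K, ∀ m ∈ (P i).support, ∀ j : Fin K, m j ≠ 0 → j < i)
    (α : Fin K → ℕ) :
    ∀ β ∈ (∏ i : Fin K,
        (MvPolynomial.C (c i) * MvPolynomial.X i + P i) ^ (α i)).support,
      ((β : (Fin K →₀ ℕ)) = Finsupp.equivFunOnFinite.symm α) ∨ ∃ i : Fin K, β i < α i ∧ ∀ j : Fin K, i < j → β j = α j := by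
  classical
  intro β hβ
  obtain ⟨m, hm, rfl⟩ := auxB Finset.univ _ β hβ
  have hprop : ∀ i : Fin K, (∀ j, i < j → m i j = 0) ∧ m i i ≤ α i ∧
      (m i i = α i → m i = Finsupp.single i (α i)) :=
    fun i => auxA (c i) (P i) i (hP i) (α i) (m i) (hm i (Finset.mem_univ i))
  by_cases hall : ∀ i : Fin K, m i = Finsupp.single i (α i)
  · left
    ext j
    rw [Finsupp.finset_sum_apply]
    simp only [hall]
    rw [Finset.sum_eq_single j (fun i _ hij => Finsupp.single_eq_of_ne' hij)
      (fun h => absurd (Finset.mem_univ j) h)]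
    simp
  · right
    push_neg at hall
    set S : Finset (Fin K) := Finset.univ.filter (fun i => m i ≠ Finsupp.single i (α i)) with hS
    have hSne : S.Nonempty := by
      obtain ⟨i, hi⟩ := hall
      exact ⟨i, by simp [hS, hi]⟩
    set i₀ := S.max' hSne with hi₀
    have hi₀S : i₀ ∈ S := S.max'_mem hSne
    have hi₀ne : m i₀ ≠ Finsupp.single i₀ (α i₀) := by
      simpa [hS] using hi₀S
    have hsingle : ∀ k, i₀ < k → m k = Finsupp.single k (α k) := by
      intro k hk
      by_contra h
      exact absurd (S.le_max' k (by simp [hS, h])) (not_le.mpr hk)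
    refine ⟨i₀, ?_, ?_⟩
    · rw [Finsupp.finset_sum_apply]
      rw [Finset.sum_eq_single i₀ ?_ (fun h => absurd (Finset.mem_univ i₀) h)]
      · have hle := (hprop i₀).2.1
        have hne : m i₀ i₀ ≠ α i₀ := fun h => hi₀ne ((hprop i₀).2.2 h)
        omega
      · intro k _ hk
        rcases lt_or_gt_of_ne hk with hlt | hgt
        · exact (hprop k).1 i₀ hlt
        · rw [hsingle k hgt, Finsupp.single_eq_of_ne' hk]
    · intro j hj
      rw [Finsupp.finset_sum_apply]
      rw [Finset.sum_eq_single j ?_ (fun h => absurd (Finset.mem_univ j) h)]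
      · rw [hsingle j hj, Finsupp.single_eq_same]
      · intro k _ hk
        rcases lt_or_gt_of_ne hk with hlt | hgt
        · exact (hprop k).1 j hlt
        · rw [hsingle k (hj.trans hgt), Finsupp.single_eq_of_ne' hk]
end

section
/- Let R be a commutative ring, K a natural number, c : Fin K → R, and P : Fin K → MvPolynomial (Fin K) R a family of polynomials such that for every i, every monomial in the support of P i involves only variables x_j with j < i. Fix an exponent vector α : Fin K → ℕ. Then the coefficient of the monomial ∏_i x_i^{α_i} in the polynomial ∏_i (c_i · x_i + P_i)^{α_i} equals ∏_i c_i^{α_i}. -/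
open MvPolynomial Finsupp

section helpers

variable {R : Type*} [CommRing R] {σ : Type*} [DecidableEq σ]

private lemma degX_le (a i : σ) :
    degreeOf a (X i : MvPolynomial σ R) ≤ if a = i then 1 else 0 := by
  classical
  rw [MvPolynomial.degreeOf_le_iff]
  intro m hm
  rw [X, support_monomial] at hm
  split_ifs at hm with h10
  · exact absurd hm (Finset.notMem_empty m)
  · rw [Finset.mem_singleton] at hm
    subst hm
    rcases eq_or_ne a i with rfl | h
    · simp
    · simp [Finsupp.single_apply, Ne.symm h]

private lemma deg_factor_le (a i : σ) (c : R) (Q : MvPolynomial σ R)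
    (hQ : ∀ m ∈ Q.support, m a = 0) :
    degreeOf a (C c * X i + Q) ≤ if a = i then 1 else 0 := by
  refine (degreeOf_add_le _ _ _).trans (max_le ?_ ?_)
  · exact (degreeOf_C_mul_le _ _ _).trans (degX_le a i)
  · rw [MvPolynomial.degreeOf_le_iff]
    intro m hm
    simp [hQ m hm]

private lemma deg_pow_le (a i : σ) (c : R) (Q : MvPolynomial σ R)
    (hQ : ∀ m ∈ Q.support, m a = 0) (n : ℕ) :
    degreeOf a ((C c * X i + Q) ^ n) ≤ n * (if a = i then 1 else 0) :=
  (degreeOf_pow_le _ _ _).trans (Nat.mul_le_mul_left n (deg_factor_le a i c Q hQ))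

/-- Monomials in `(c·X a + Q)^n` have `a`-exponent at most `n`. -/
private lemma supp_pow_bound (a : σ) (c : R) (Q : MvPolynomial σ R)
    (hQ : ∀ m ∈ Q.support, m a = 0) (n : ℕ) {m : σ →₀ ℕ}
    (hm : m ∈ ((C c * X a + Q) ^ n).support) : m a ≤ n := by
  have := (monomial_le_degreeOf a hm).trans (deg_pow_le a a c Q hQ n)
  simpa using this

/-- Key lemma: coefficient of monomials of top `a`-degree in `(c·X a + Q)^n`. -/
private lemma coeff_pow_triangular (a : σ) (c : R) (Q : MvPolynomial σ R)
    (hQ : ∀ m ∈ Q.support, m a = 0) :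
    ∀ (n : ℕ) (u : σ →₀ ℕ), u a = n →
      coeff u ((C c * X a + Q) ^ n) = if u = Finsupp.single a n then c ^ n else 0 := by
  intro n
  induction n with
  | zero =>
    intro u hu
    simp only [pow_zero, MvPolynomial.coeff_one, Finsupp.single_zero]
    by_cases h : u = 0 <;> simp [h, eq_comm]
  | succ n ih =>
    intro u hu
    have he_le : Finsupp.single a 1 ≤ u := by
      rw [Finsupp.le_iff]
      intro s hs
      rcases eq_or_ne s a with rfl | h
      · simp [hu]
      · simp [Finsupp.single_apply, Ne.symm h, h] at hs
    have hmem : (Finsupp.single a 1, u - Finsupp.single a 1) ∈ Finset.HasAntidiagonal.antidiagonal u := by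
      rw [Finset.HasAntidiagonal.mem_antidiagonal, add_comm, tsub_add_cancel_of_le he_le]
    rw [pow_succ', MvPolynomial.coeff_mul]
    rw [Finset.sum_eq_single_of_mem _ hmem]
    · have hsub : (u - Finsupp.single a 1 : σ →₀ ℕ) a = n := by
        rw [Finsupp.tsub_apply, hu]; simp
      rw [ih _ hsub]
      have hce : coeff (Finsupp.single a 1) (C c * X a + Q) = c := by
        rw [MvPolynomial.coeff_add, C_mul_X_eq_monomial, coeff_monomial, if_pos rfl]
        have : coeff (Finsupp.single a 1) Q = 0 := by
          by_contra h
          have := hQ _ (MvPolynomial.mem_support_iff.mpr h)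
          simp at this
        simp [this]
      rw [hce]
      by_cases h : u = Finsupp.single a (n + 1)
      · subst h
        have : Finsupp.single a (n + 1) - Finsupp.single a 1 = Finsupp.single a n := by
          ext s; simp [Finsupp.single_apply]
        rw [if_pos rfl, this, if_pos rfl, pow_succ, mul_comm]
      · rw [if_neg h, if_neg, mul_zero]
        intro hc
        apply h
        have : u = (u - Finsupp.single a 1) + Finsupp.single a 1 :=
          (tsub_add_cancel_of_le he_le).symm
        rw [this, hc]
        ext s
        simp [Finsupp.single_apply]
    · rintro ⟨x, y⟩ hxy hne
      rw [Finset.HasAntidiagonal.mem_antidiagonal] at hxy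
      by_cases hx : x a = 0
      · have hy : y a = n + 1 := by
          have := congrArg (fun f => f a) hxy
          simpa [hx, hu] using this
        have : coeff y ((C c * X a + Q) ^ n) = 0 := by
          by_contra h
          have := supp_pow_bound a c Q hQ n (MvPolynomial.mem_support_iff.mpr h)
          omega
        rw [this, mul_zero]
      · have hxQ : coeff x Q = 0 := by
          by_contra h
          exact hx (hQ _ (MvPolynomial.mem_support_iff.mpr h))
        rw [MvPolynomial.coeff_add, C_mul_X_eq_monomial, coeff_monomial, hxQ, add_zero]
        rw [if_neg, zero_mul]
        rintro rfl
        apply hne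
        have : y = u - Finsupp.single a 1 := by
          have := hxy
          ext s
          have h2 := congrArg (fun f => f s) hxy
          simp only [Finsupp.coe_add, Pi.add_apply] at h2
          simp [Finsupp.tsub_apply, ← h2]
        rw [this]

end helpers

/-- The leading monomial of the triangular product survives: the coefficient of
`∏ i, X i ^ α i` in `∏ i, (c i • X i + P i) ^ α i` is `∏ i, c i ^ α i`. -/
theorem stmt_1 (R : Type*) [CommRing R] (K : ℕ)
    (c : Fin K → R) (P : Fin K → MvPolynomial (Fin K) R)
    (hP : ∀ i : Fin K, ∀ m ∈ (P i).support, ∀ j : Fin K, m j ≠ 0 → j < i)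
    (α : Fin K → ℕ) :
    MvPolynomial.coeff (Finsupp.equivFunOnFinite.symm α)
        (∏ i : Fin K, (MvPolynomial.C (c i) * MvPolynomial.X i + P i) ^ (α i))
      = ∏ i : Fin K, c i ^ α i := by
  classical
  have hPa : ∀ (i a : Fin K), ¬ (a < i) → ∀ m ∈ (P i).support, m a = 0 := by
    intro i a ha m hm
    by_contra h
    exact ha (hP i m hm a h)
  -- generalized statement over finsets
  have main : ∀ s : Finset (Fin K),
      MvPolynomial.coeff (Finsupp.equivFunOnFinite.symm fun i => if i ∈ s then α i else 0)
        (∏ i ∈ s, (MvPolynomial.C (c i) * MvPolynomial.X i + P i) ^ (α i))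
      = ∏ i ∈ s, c i ^ α i := by
    intro s
    induction s using Finset.induction_on_max with
    | empty =>
      rw [show (Finsupp.equivFunOnFinite.symm fun i : Fin K => if i ∈ (∅ : Finset (Fin K)) then α i else 0) = 0 from by ext i; simp]
      simp
    | insert a s hlt ih =>
      have ha : a ∉ s := fun h => lt_irrefl a (hlt a h)
      rw [Finset.prod_insert ha, Finset.prod_insert ha]
      set Qs := ∏ i ∈ s, (MvPolynomial.C (c i) * MvPolynomial.X i + P i) ^ (α i) with hQs
      -- monomials of Qs have zero a-exponent
      have hQsupp : ∀ v ∈ Qs.support, v a = 0 := by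
        intro v hv
        have hdeg : MvPolynomial.degreeOf a Qs ≤ 0 := by
          refine (MvPolynomial.degreeOf_prod_le _ _ _).trans ?_
          refine le_trans (Finset.sum_le_sum fun i hi =>
            deg_pow_le a i (c i) (P i) (hPa i a (fun h => absurd (h.trans (hlt i hi)) (lt_irrefl a))) (α i)) ?_
          have : ∀ i ∈ s, α i * (if a = i then 1 else 0) = 0 := by
            intro i hi
            have : a ≠ i := fun h => absurd (h ▸ hlt i hi) (lt_irrefl a)
            simp [this]
          rw [Finset.sum_congr rfl this, Finset.sum_const_zero]
        have := MvPolynomial.monomial_le_degreeOf a hv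
        omega
      set m' : Fin K →₀ ℕ := Finsupp.equivFunOnFinite.symm fun i => if i ∈ insert a s then α i else 0 with hm'
      have hm'app : ∀ i, m' i = if i ∈ insert a s then α i else 0 := fun i => rfl
      have hm'a : m' a = α a := by simp [hm'app]
      have he_le : Finsupp.single a (α a) ≤ m' := by
        rw [Finsupp.le_iff]
        intro i hi
        rcases eq_or_ne i a with rfl | h
        · simp [hm'a]
        · simp [Finsupp.single_apply, Ne.symm h, h] at hi
      have hsub : m' - Finsupp.single a (α a)
          = Finsupp.equivFunOnFinite.symm fun i => if i ∈ s then α i else 0 := by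
        ext i
        rcases eq_or_ne i a with rfl | h
        · simp [Finsupp.tsub_apply, hm'a, ha]
        · simp [Finsupp.tsub_apply, hm'app, Finsupp.single_apply, Ne.symm h, h,
            Finset.mem_insert]
      have hmem : (Finsupp.single a (α a), m' - Finsupp.single a (α a)) ∈ Finset.HasAntidiagonal.antidiagonal m' := by
        rw [Finset.HasAntidiagonal.mem_antidiagonal, add_comm, tsub_add_cancel_of_le he_le]
      rw [MvPolynomial.coeff_mul]
      rw [Finset.sum_eq_single_of_mem _ hmem]
      · rw [hsub, ih]
        have := coeff_pow_triangular a (c a) (P a) (hPa a a (lt_irrefl a)) (α a)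
          (Finsupp.single a (α a)) (by simp)
        rw [this, if_pos rfl]
      · rintro ⟨x, y⟩ hxy hne
        rw [Finset.HasAntidiagonal.mem_antidiagonal] at hxy
        by_cases hy : y a = 0
        · have hx : x a = α a := by
            have := congrArg (fun f => f a) hxy
            simp only [Finsupp.coe_add, Pi.add_apply, hy, add_zero] at this
            rw [this, hm'a]
          rw [coeff_pow_triangular a (c a) (P a) (hPa a a (lt_irrefl a)) (α a) x hx]
          rw [if_neg, zero_mul]
          rintro rfl
          apply hne
          have : y = m' - Finsupp.single a (α a) := by
            ext i
            have h2 := congrArg (fun f => f i) hxy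
            simp only [Finsupp.coe_add, Pi.add_apply] at h2
            simp [Finsupp.tsub_apply, ← h2]
          rw [this]
        · have : MvPolynomial.coeff y Qs = 0 := by
            by_contra h
            exact hy (hQsupp _ (MvPolynomial.mem_support_iff.mpr h))
          rw [this, mul_zero]
  have := main Finset.univ
  simpa using this
end
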